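/- Let d ≥ 1 and n ≥ 3 with (d,n) ≠ (1,3). Then for every i ∈ [n] and every ω ∈ 𝔽₂^d, the nonnegativity inequality x^i_ω ≥ 0 defines a facet of the full cyclic transversal polytope CTP[d,n]: the set { x ∈ CTP[d,n] : x^i_ω = 0 } has dimension n·(2^d − 1) − 1, one less than the dimension of CTP[d,n]. -/

import Mathlib

open scoped Classical

/-- The field `𝔽₂^d`, represented as functions `Fin d → ZMod 2`. -/
abbrev F2 (d : ℕ) : Type := Fin d → ZMod 2

/-- A cyclic transversal of a block configuration `B`. -/
def IsCyclicTransversal {d n : ℕ} (B : Fin n → Set (F2 d)) (ξ : Fin n → F2 d) : Prop :=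
  (∀ i, ξ i ∈ B i) ∧ (∑ i, ξ i) = 0

/-- The incidence vector of a transversal. -/
noncomputable def incVec {d n : ℕ} (ξ : Fin n → F2 d) : Fin n → F2 d → ℝ :=
  fun i ω => if ξ i = ω then 1 else 0

/-- The cyclic transversal polytope of a block configuration. -/
noncomputable def CTP {d n : ℕ} (B : Fin n → Set (F2 d)) : Set (Fin n → F2 d → ℝ) :=
  convexHull ℝ (incVec '' { ξ | IsCyclicTransversal B ξ })

/-- The transversal polytope of a block configuration. -/
def TP {d n : ℕ} (B : Fin n → Set (F2 d)) : Set (Fin n → F2 d → ℝ) :=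
  { x | (∀ i ω, 0 ≤ x i ω) ∧ (∀ i ω, ω ∉ B i → x i ω = 0) ∧ ∀ i, (∑ ω : F2 d, x i ω) = 1 }

/-- The size of a block configuration. -/
noncomputable def blockSize {d n : ℕ} (B : Fin n → Set (F2 d)) : ℕ := ∑ i, (B i).ncard

/-- The rank of a block configuration. -/
noncomputable def blockRank {d n : ℕ} (B : Fin n → Set (F2 d)) : ℕ :=
  Module.finrank (ZMod 2) (Submodule.span (ZMod 2) (⋃ i, B i))

/-- Two sets of real vectors are affinely isomorphic. -/
def AffIso {α β : Type*} [AddCommGroup α] [Module ℝ α] [AddCommGroup β] [Module ℝ β]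
    (P : Set α) (Q : Set β) : Prop :=
  ∃ f : α →ᵃ[ℝ] β, Set.InjOn f P ∧ f '' P = Q

/-- The left-hand side of the lifted odd-set (LOS) inequality associated with `η` and `I`. -/
noncomputable def losLHS {d n : ℕ} (B : Fin n → Set (F2 d)) (η : F2 d) (I : Finset (Fin n))
    (x : Fin n → F2 d → ℝ) : ℝ :=
  (∑ i ∈ I, ∑ ω ∈ Finset.univ.filter (fun ω : F2 d => ω ∈ B i ∧ (∑ j, η j * ω j) = 0), x i ω) +
  (∑ i ∈ Iᶜ, ∑ ω ∈ Finset.univ.filter (fun ω : F2 d => ω ∈ B i ∧ (∑ j, η j * ω j) = 1), x i ω)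

namespace CTPAux
variable {d n : ℕ}
lemma f2_add_self (x : F2 d) : x + x = 0 := by
  funext t
  have h : ∀ y : ZMod 2, y + y = 0 := by decide
  exact h (x t)
def bump (p : Fin n) (a : F2 d) : Fin n → F2 d := fun t => if t = p then a else 0
lemma sum_bump (p : Fin n) (a : F2 d) : ∑ t, bump p a t = a := by
  simp [bump, Finset.sum_ite_eq']
lemma sum_bump3 (p q r : Fin n) (a b u : F2 d) :
    ∑ t, (bump p a + bump q b + bump r u) t = a + b + u := by
  simp [Finset.sum_add_distrib, sum_bump]

lemma sum_bump4 (p q r s : Fin n) (a b u v : F2 d) :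
    ∑ t, (bump p a + bump q b + bump r u + bump s v) t = a + b + u + v := by
  simp [Finset.sum_add_distrib, sum_bump]
def eV (j : Fin n) (a : F2 d) : Fin n → F2 d → ℝ :=
  fun j' ω' => if j' = j then (if a = ω' then 1 else 0) else 0
def Sset (i : Fin n) (ω : F2 d) : Set (Fin n → F2 d) := {ξ | (∑ r, ξ r) = 0 ∧ ξ i ≠ ω}
noncomputable def Dsub (i : Fin n) (ω : F2 d) : Submodule ℝ (Fin n → F2 d → ℝ) :=
  (affineSpan ℝ (incVec '' Sset i ω)).direction
lemma diff_mem {i : Fin n} {ω : F2 d} {ξ ξ' : Fin n → F2 d}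
    (h : ξ ∈ Sset i ω) (h' : ξ' ∈ Sset i ω) : incVec ξ - incVec ξ' ∈ Dsub i ω := by
  have h1 : incVec ξ ∈ affineSpan ℝ (incVec '' Sset i ω) :=
    subset_affineSpan ℝ _ (Set.mem_image_of_mem _ h)
  have h2 : incVec ξ' ∈ affineSpan ℝ (incVec '' Sset i ω) :=
    subset_affineSpan ℝ _ (Set.mem_image_of_mem _ h')
  have := AffineSubspace.vsub_mem_direction h1 h2
  simpa [vsub_eq_sub, Dsub] using this

/-- Scheme A: `j = i`, values `a b ≠ ω`. -/
lemma moveA {i q q' : Fin n} (hqi : q ≠ i) (hq'i : q' ≠ i) (hqq' : q ≠ q')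
    {ω a b σ : F2 d} (ha : a ≠ ω) (hb : b ≠ ω) (hσ : σ ≠ ω) :
    eV i a - eV i b ∈ Dsub i ω := by
  have hiv : ∀ (x y z : F2 d), (bump i x + bump q y + bump q' z) i = x := by
    intro x y z; simp [bump, hqi.symm, hq'i.symm]
  have hqv : ∀ (x y z : F2 d), (bump i x + bump q y + bump q' z) q = y := by
    intro x y z; simp [bump, hqi, hqq']
  have hq'v : ∀ (x y z : F2 d), (bump i x + bump q y + bump q' z) q' = z := by
    intro x y z; simp [bump, hq'i, hqq'.symm]
  have hov : ∀ (x y z : F2 d) (t : Fin n), t ≠ i → t ≠ q → t ≠ q' →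
      (bump i x + bump q y + bump q' z) t = 0 := by
    intro x y z t h1 h2 h3; simp [bump, h1, h2, h3]
  have hm : ∀ (x y z : F2 d), x + y + z = 0 → x ≠ ω →
      (bump i x + bump q y + bump q' z) ∈ Sset i ω := by
    intro x y z hsum hx
    exact ⟨by rw [sum_bump3]; exact hsum, by rw [hiv]; exact hx⟩
  have m₁ := hm a a 0 (by linear_combination (f2_add_self a)) ha
  have m₂ := hm b b 0 (by linear_combination (f2_add_self b)) hb
  have m₃ := hm a σ (a+σ) (by linear_combination (f2_add_self a) + (f2_add_self σ)) ha
  have m₄ := hm b σ (b+σ) (by linear_combination (f2_add_self b) + (f2_add_self σ)) hb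
  have m₅ := hm σ a (a+σ) (by linear_combination (f2_add_self a) + (f2_add_self σ)) hσ
  have m₆ := hm σ b (b+σ) (by linear_combination (f2_add_self b) + (f2_add_self σ)) hσ
  have key : eV i a - eV i b = (2⁻¹ : ℝ) •
      ((incVec (bump i a + bump q a + bump q' 0) - incVec (bump i b + bump q b + bump q' 0))
      + (incVec (bump i a + bump q σ + bump q' (a+σ))
          - incVec (bump i b + bump q σ + bump q' (b+σ)))
      - (incVec (bump i σ + bump q a + bump q' (a+σ))
          - incVec (bump i σ + bump q b + bump q' (b+σ)))) := by
    funext t ω'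
    by_cases ht : t = i
    · simp only [incVec, eV, Pi.sub_apply, Pi.add_apply, Pi.smul_apply, smul_eq_mul, bump,
        ht, hqi.symm, hq'i.symm, eq_self_iff_true, if_true, if_false, add_zero, zero_add]
      split_ifs <;> norm_num
    · by_cases htq : t = q
      · simp only [incVec, eV, Pi.sub_apply, Pi.add_apply, Pi.smul_apply, smul_eq_mul, bump,
          htq, hqi, hqq', eq_self_iff_true, if_true, if_false, add_zero, zero_add]
        split_ifs <;> norm_num
      · by_cases htq' : t = q'
        · simp only [incVec, eV, Pi.sub_apply, Pi.add_apply, Pi.smul_apply, smul_eq_mul, bump,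
            htq', hq'i, hqq'.symm, eq_self_iff_true, if_true, if_false, add_zero, zero_add]
          split_ifs <;> norm_num
        · simp only [incVec, eV, Pi.sub_apply, Pi.add_apply, Pi.smul_apply, smul_eq_mul, bump,
            ht, htq, htq', eq_self_iff_true, if_true, if_false, add_zero, zero_add]
          split_ifs <;> norm_num
  rw [key]
  exact Submodule.smul_mem _ _
    (sub_mem (add_mem (diff_mem m₁ m₂) (diff_mem m₃ m₄)) (diff_mem m₅ m₆))
end CTPAux

namespace CTPAux
variable {d n : ℕ}

/-- Scheme B3: `j ≠ i`, three positions. -/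
lemma moveB3 {i j k : Fin n} (hji : j ≠ i) (hki : k ≠ i) (hjk : j ≠ k)
    {ω a b c c₂ : F2 d} (hac : a + c ≠ ω) (hbc : b + c ≠ ω) (hcc : c + c₂ ≠ ω) :
    eV j a - eV j b ∈ Dsub i ω := by
  have hm : ∀ (x y z : F2 d), x + y + z = 0 → x ≠ ω →
      (bump i x + bump j y + bump k z) ∈ Sset i ω := by
    intro x y z hsum hx
    refine ⟨by rw [sum_bump3]; exact hsum, ?_⟩
    have : (bump i x + bump j y + bump k z) i = x := by
      simp [bump, hji.symm, hki.symm]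
    rw [this]; exact hx
  have m₁ := hm (a+c) a c (by linear_combination (f2_add_self a) + (f2_add_self c)) hac
  have m₂ := hm (b+c) b c (by linear_combination (f2_add_self b) + (f2_add_self c)) hbc
  have m₃ := hm (a+c) c₂ (a+c+c₂)
    (by linear_combination (f2_add_self a) + (f2_add_self c) + (f2_add_self c₂)) hac
  have m₄ := hm (b+c) c₂ (b+c+c₂)
    (by linear_combination (f2_add_self b) + (f2_add_self c) + (f2_add_self c₂)) hbc
  have m₅ := hm (c+c₂) a (a+c+c₂)
    (by linear_combination (f2_add_self a) + (f2_add_self c) + (f2_add_self c₂)) hcc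
  have m₆ := hm (c+c₂) b (b+c+c₂)
    (by linear_combination (f2_add_self b) + (f2_add_self c) + (f2_add_self c₂)) hcc
  have key : eV j a - eV j b = (2⁻¹ : ℝ) •
      ((incVec (bump i (a+c) + bump j a + bump k c)
          - incVec (bump i (b+c) + bump j b + bump k c))
      + (incVec (bump i (c+c₂) + bump j a + bump k (a+c+c₂))
          - incVec (bump i (c+c₂) + bump j b + bump k (b+c+c₂)))
      - (incVec (bump i (a+c) + bump j c₂ + bump k (a+c+c₂))
          - incVec (bump i (b+c) + bump j c₂ + bump k (b+c+c₂)))) := by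
    funext t ω'
    by_cases ht : t = i
    · simp only [incVec, eV, Pi.sub_apply, Pi.add_apply, Pi.smul_apply, smul_eq_mul, bump,
        ht, hji.symm, hki.symm, eq_self_iff_true, if_true, if_false, add_zero, zero_add]
      split_ifs <;> norm_num
    · by_cases htj : t = j
      · simp only [incVec, eV, Pi.sub_apply, Pi.add_apply, Pi.smul_apply, smul_eq_mul, bump,
          htj, hji, hjk, eq_self_iff_true, if_true, if_false, add_zero, zero_add]
        split_ifs <;> norm_num
      · by_cases htk : t = k
        · simp only [incVec, eV, Pi.sub_apply, Pi.add_apply, Pi.smul_apply, smul_eq_mul, bump,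
            htk, hki, hjk.symm, eq_self_iff_true, if_true, if_false, add_zero, zero_add]
          split_ifs <;> norm_num
        · simp only [incVec, eV, Pi.sub_apply, Pi.add_apply, Pi.smul_apply, smul_eq_mul, bump,
            ht, htj, htk, eq_self_iff_true, if_true, if_false, add_zero, zero_add]
          split_ifs <;> norm_num
  rw [key]
  exact Submodule.smul_mem _ _
    (sub_mem (add_mem (diff_mem m₁ m₂) (diff_mem m₅ m₆)) (diff_mem m₃ m₄))

/-- Scheme B4: `j ≠ i`, four positions. -/
lemma moveB4 {i j k l : Fin n} (hji : j ≠ i) (hki : k ≠ i) (hli : l ≠ i)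
    (hjk : j ≠ k) (hjl : j ≠ l) (hkl : k ≠ l)
    {ω a b σ : F2 d} (hσ : σ ≠ ω) :
    eV j a - eV j b ∈ Dsub i ω := by
  have hm : ∀ (x y z : F2 d), x + y + z + σ = 0 →
      (bump j x + bump k y + bump l z + bump i σ) ∈ Sset i ω := by
    intro x y z hsum
    refine ⟨?_, ?_⟩
    · rw [sum_bump4, hsum]
    · have : (bump j x + bump k y + bump l z + bump i σ) i = σ := by
        simp [bump, hji.symm, hki.symm, hli.symm]
      rw [this]; exact hσ
  have m₁ := hm a a σ (by linear_combination (f2_add_self a) + (f2_add_self σ))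
  have m₂ := hm b b σ (by linear_combination (f2_add_self b) + (f2_add_self σ))
  have m₃ := hm a σ a (by linear_combination (f2_add_self a) + (f2_add_self σ))
  have m₄ := hm b σ b (by linear_combination (f2_add_self b) + (f2_add_self σ))
  have m₅ := hm σ a a (by linear_combination (f2_add_self a) + (f2_add_self σ))
  have m₆ := hm σ b b (by linear_combination (f2_add_self b) + (f2_add_self σ))
  have key : eV j a - eV j b = (2⁻¹ : ℝ) •
      ((incVec (bump j a + bump k a + bump l σ + bump i σ)
          - incVec (bump j b + bump k b + bump l σ + bump i σ))
      + (incVec (bump j a + bump k σ + bump l a + bump i σ)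
          - incVec (bump j b + bump k σ + bump l b + bump i σ))
      - (incVec (bump j σ + bump k a + bump l a + bump i σ)
          - incVec (bump j σ + bump k b + bump l b + bump i σ))) := by
    funext t ω'
    by_cases htj : t = j
    · simp only [incVec, eV, Pi.sub_apply, Pi.add_apply, Pi.smul_apply, smul_eq_mul, bump,
        htj, hji, hjk, hjl, eq_self_iff_true, if_true, if_false, add_zero, zero_add]
      split_ifs <;> norm_num
    · by_cases htk : t = k
      · simp only [incVec, eV, Pi.sub_apply, Pi.add_apply, Pi.smul_apply, smul_eq_mul, bump,
          htk, hki, hjk.symm, hkl, eq_self_iff_true, if_true, if_false, add_zero, zero_add]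
        split_ifs <;> norm_num
      · by_cases htl : t = l
        · simp only [incVec, eV, Pi.sub_apply, Pi.add_apply, Pi.smul_apply, smul_eq_mul, bump,
            htl, hli, hjl.symm, hkl.symm, eq_self_iff_true, if_true, if_false,
            add_zero, zero_add]
          split_ifs <;> norm_num
        · by_cases hti : t = i
          · simp only [incVec, eV, Pi.sub_apply, Pi.add_apply, Pi.smul_apply, smul_eq_mul, bump,
              hti, hji.symm, hki.symm, hli.symm, eq_self_iff_true, if_true, if_false,
              add_zero, zero_add]
            split_ifs <;> norm_num
          · simp only [incVec, eV, Pi.sub_apply, Pi.add_apply, Pi.smul_apply, smul_eq_mul, bump,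
              hti, htj, htk, htl, eq_self_iff_true, if_true, if_false, add_zero, zero_add]
            split_ifs <;> norm_num
  rw [key]
  exact Submodule.smul_mem _ _
    (sub_mem (add_mem (diff_mem m₁ m₂) (diff_mem m₃ m₄)) (diff_mem m₅ m₆))

end CTPAux

namespace CTPAux
variable {d n : ℕ}

lemma exists_third (x y : Fin n) (hn : 3 ≤ n) : ∃ z : Fin n, z ≠ x ∧ z ≠ y := by
  by_contra h
  push_neg at h
  have hsub : (Finset.univ : Finset (Fin n)) ⊆ {x, y} := by
    intro z _
    by_cases hzx : z = x
    · simp [hzx]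
    · simp [h z hzx]
  have h1 := Finset.card_le_card hsub
  simp [Fintype.card_fin] at h1
  have h2 := Finset.card_insert_le x ({y} : Finset (Fin n))
  simp at h2
  omega

lemma exists_ne_two (x y : F2 d) (hd : 2 ≤ d) : ∃ c : F2 d, c ≠ x ∧ c ≠ y := by
  by_contra h
  push_neg at h
  have hsub : (Finset.univ : Finset (F2 d)) ⊆ {x, y} := by
    intro z _
    by_cases hzx : z = x
    · simp [hzx]
    · simp [h z hzx]
  have h1 := Finset.card_le_card hsub
  have h3 := Finset.card_insert_le x ({y} : Finset (F2 d))
  simp [Finset.card_univ] at h1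
  simp at h3
  have : 4 ≤ 2 ^ d := by
    calc 4 = 2 ^ 2 := rfl
    _ ≤ 2 ^ d := Nat.pow_le_pow_right (by norm_num) hd
  omega

lemma exists_fourth (x y z : Fin n) (hn : 4 ≤ n) : ∃ w : Fin n, w ≠ x ∧ w ≠ y ∧ w ≠ z := by
  by_contra h
  push_neg at h
  have hsub : (Finset.univ : Finset (Fin n)) ⊆ {x, y, z} := by
    intro w _
    by_cases hwx : w = x
    · simp [hwx]
    · by_cases hwy : w = y
      · simp [hwy]
      · simp [h w hwx hwy]
  have h1 := Finset.card_le_card hsub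
  simp [Fintype.card_fin] at h1
  have h2 : ({x, y, z} : Finset (Fin n)).card ≤ 3 := by
    apply le_trans (Finset.card_insert_le _ _)
    have := Finset.card_insert_le y ({z} : Finset (Fin n))
    simp at this ⊢
    omega
  omega

lemma exists_ne_omega (hd : 1 ≤ d) (ω : F2 d) : ∃ σ : F2 d, σ ≠ ω := by
  refine ⟨ω + (fun _ => 1), fun h => ?_⟩
  have h0 := congrFun h ⟨0, hd⟩
  simp at h0

lemma move_mem (hd : 1 ≤ d) (hn : 3 ≤ n) (hdn : ¬(d = 1 ∧ n = 3)) (i : Fin n) (ω : F2 d)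
    (j : Fin n) (a b : F2 d) (hj : j = i → a ≠ ω ∧ b ≠ ω) :
    eV j a - eV j b ∈ Dsub i ω := by
  obtain ⟨σ, hσ⟩ := exists_ne_omega hd ω
  by_cases hji : j = i
  · subst hji
    obtain ⟨q, hq, -⟩ := exists_third j j hn
    obtain ⟨q', hq'1, hq'2⟩ := exists_third j q hn
    exact moveA hq hq'1 (Ne.symm hq'2) (hj rfl).1 (hj rfl).2 hσ
  · obtain ⟨k, hki, hkj⟩ := exists_third i j hn
    by_cases hd2 : 2 ≤ d
    · obtain ⟨c, hc1, hc2⟩ := exists_ne_two (a + ω) (b + ω) hd2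
      obtain ⟨c₂, hc₂⟩ := exists_ne_omega hd (c + ω)
      refine moveB3 (c := c) (c₂ := c₂) hji hki (Ne.symm hkj) (fun h => hc1 ?_) (fun h => hc2 ?_)
        (fun h => hc₂ ?_)
      · linear_combination h - f2_add_self a
      · linear_combination h - f2_add_self b
      · linear_combination h - f2_add_self c
    · have hd1 : d = 1 := by omega
      have hn4 : 4 ≤ n := by
        rcases Nat.lt_or_ge n 4 with h | h
        · exact absurd ⟨hd1, by omega⟩ hdn
        · exact h
      obtain ⟨l, hl1, hl2, hl3⟩ := exists_fourth i j k hn4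
      exact moveB4 hji hki hl1 (Ne.symm hkj) (Ne.symm hl2) (Ne.symm hl3) hσ

lemma ker_le_Dsub (hd : 1 ≤ d) (hn : 3 ≤ n) (hdn : ¬(d = 1 ∧ n = 3)) (i : Fin n) (ω : F2 d)
    (y : Fin n → F2 d → ℝ) (hy1 : ∀ j, ∑ ω', y j ω' = 0) (hy2 : y i ω = 0) :
    y ∈ Dsub i ω := by
  obtain ⟨ρ, hρ⟩ := exists_ne_omega hd ω
  have rep : y = ∑ j : Fin n, ∑ α : F2 d,
      y j α • (eV j α - eV j (if j = i then ρ else ω)) := by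
    funext t ω'
    rw [Finset.sum_apply, Finset.sum_apply]
    rw [Finset.sum_eq_single t]
    · simp only [Finset.sum_apply, Pi.smul_apply, Pi.sub_apply, smul_eq_mul, eV,
        eq_self_iff_true, if_true]
      have e1 : ∑ α : F2 d, y t α * ((if α = ω' then (1:ℝ) else 0)
          - (if (if t = i then ρ else ω) = ω' then (1:ℝ) else 0))
          = (∑ α : F2 d, y t α * (if α = ω' then (1:ℝ) else 0))
          - (∑ α : F2 d, y t α) * (if (if t = i then ρ else ω) = ω' then (1:ℝ) else 0) := by
        rw [Finset.sum_mul, ← Finset.sum_sub_distrib]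
        congr 1
        funext α
        ring
      rw [e1, hy1 t, zero_mul, sub_zero]
      simp only [mul_ite, mul_one, mul_zero]
      rw [Finset.sum_ite_eq' Finset.univ ω' (fun α => y t α)]
      simp
    · intro j _ hj
      have hne : ¬(t = j) := fun h => hj h.symm
      simp [eV, hne]
    · intro h
      exact absurd (Finset.mem_univ t) h
  rw [rep]
  apply Submodule.sum_mem
  intro j _
  apply Submodule.sum_mem
  intro α _
  by_cases hcase : j = i ∧ α = ω
  · obtain ⟨h1, h2⟩ := hcase
    subst h1; subst h2
    rw [hy2, zero_smul]
    exact Submodule.zero_mem _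
  · refine Submodule.smul_mem _ _ (move_mem hd hn hdn i ω j α _ ?_)
    intro hji
    rw [if_pos hji]
    exact ⟨fun hα => hcase ⟨hji, hα⟩, hρ⟩

end CTPAux

namespace CTPAux
variable {d n : ℕ}

noncomputable def Phi (i : Fin n) (ω : F2 d) :
    (Fin n → F2 d → ℝ) →ₗ[ℝ] ((Fin n → ℝ) × ℝ) where
  toFun x := (fun j => ∑ ω', x j ω', x i ω)
  map_add' x y := by
    refine Prod.ext ?_ rfl
    funext j
    simp [Finset.sum_add_distrib]
  map_smul' r x := by
    refine Prod.ext ?_ rfl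
    funext j
    simp [Finset.mul_sum]

lemma Phi_surj (i : Fin n) (ω ρ : F2 d) (hρ : ρ ≠ ω) :
    Function.Surjective (Phi i ω) := by
  rintro ⟨c, t⟩
  refine ⟨fun j ω'' => if j = i then (if ω'' = ω then t else if ω'' = ρ then c i - t else 0)
    else (if ω'' = ω then c j else 0), ?_⟩
  refine Prod.ext ?_ ?_
  · funext j
    show (∑ ω'' : F2 d, (fun j ω'' => if j = i then (if ω'' = ω then t
        else if ω'' = ρ then c i - t else 0)
        else (if ω'' = ω then c j else 0)) j ω'') = c j
    dsimp only
    by_cases hj : j = i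
    · subst hj
      simp only [eq_self_iff_true, if_true]
      have hsplit : ∀ ω'' : F2 d, (if ω'' = ω then t else if ω'' = ρ then c j - t else 0)
          = (if ω'' = ω then t else 0) + (if ω'' = ρ then c j - t else 0) := by
        intro ω''
        by_cases h1 : ω'' = ω
        · rw [if_pos h1, if_pos h1, if_neg (fun h2 : ω'' = ρ => hρ (h2.symm.trans h1)), add_zero]
        · rw [if_neg h1, if_neg h1, zero_add]
      rw [Finset.sum_congr rfl (fun ω'' _ => hsplit ω''), Finset.sum_add_distrib,
        Finset.sum_ite_eq' Finset.univ ω (fun _ => t),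
        Finset.sum_ite_eq' Finset.univ ρ (fun _ => c j - t)]
      simp
    · simp only [if_neg hj]
      rw [Finset.sum_ite_eq' Finset.univ ω (fun _ => c j)]
      simp
  · show (if i = i then (if ω = ω then t else _) else _) = t
    simp
end CTPAux

open CTPAux

/-- for `(d, n) ≠ (1, 3)`, each nonnegativity inequality `x^i_ω ≥ 0` defines
a facet of the full CTP. -/
theorem statement8 (d n : ℕ) (hd : 1 ≤ d) (hn : 3 ≤ n) (hdn : ¬(d = 1 ∧ n = 3))
    (i : Fin n) (ω : F2 d) :
    Module.finrank ℝ
        (affineSpan ℝ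
          { x ∈ CTP (fun _ : Fin n => (Set.univ : Set (F2 d))) | x i ω = 0 }).direction
      = n * (2 ^ d - 1) - 1 := by
  obtain ⟨ρ, hρ⟩ := exists_ne_omega hd ω
  set F := { x ∈ CTP (fun _ : Fin n => (Set.univ : Set (F2 d))) | x i ω = 0 } with hF
  have hrow : ∀ x ∈ CTP (fun _ : Fin n => (Set.univ : Set (F2 d))),
      ∀ j, ∑ ω' : F2 d, x j ω' = 1 := by
    intro x hx
    have hconv : Convex ℝ {x : Fin n → F2 d → ℝ | ∀ j, ∑ ω' : F2 d, x j ω' = 1} := by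
      intro u hu v hv p q hp hq hpq j
      simp only [Pi.add_apply, Pi.smul_apply, smul_eq_mul]
      rw [Finset.sum_add_distrib, ← Finset.mul_sum, ← Finset.mul_sum, hu j, hv j]
      simpa using hpq
    refine convexHull_min ?_ hconv hx
    rintro _ ⟨ξ, hξ, rfl⟩ j
    simp [incVec, Finset.sum_ite_eq]
  have key : (affineSpan ℝ F).direction = LinearMap.ker (Phi i ω) := by
    apply le_antisymm
    · rw [direction_affineSpan, vectorSpan_def, Submodule.span_le]
      rintro v ⟨x, hx, y, hy, rfl⟩
      rw [SetLike.mem_coe, LinearMap.mem_ker]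
      show Phi i ω (x - y) = 0
      rw [map_sub]
      have ex : Phi i ω x = Phi i ω y := by
        refine Prod.ext ?_ ?_
        · funext j
          show (∑ ω' : F2 d, x j ω') = ∑ ω' : F2 d, y j ω'
          rw [hrow x hx.1 j, hrow y hy.1 j]
        · show x i ω = y i ω
          rw [hx.2, hy.2]
      rw [ex, sub_self]
    · intro y hy
      have h1 : Dsub i ω ≤ (affineSpan ℝ F).direction := by
        apply AffineSubspace.direction_le
        apply affineSpan_mono
        rintro _ ⟨ξ, hξ, rfl⟩
        refine ⟨?_, ?_⟩
        · exact subset_convexHull ℝ _ ⟨ξ, ⟨fun r => Set.mem_univ _, hξ.1⟩, rfl⟩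
        · simp [incVec, hξ.2]
      apply h1
      have hy' := (LinearMap.mem_ker).1 hy
      refine ker_le_Dsub hd hn hdn i ω y ?_ ?_
      · intro j
        exact congrFun (congrArg Prod.fst hy') j
      · exact congrArg Prod.snd hy'
  rw [key]
  have hrn := LinearMap.finrank_range_add_finrank_ker (Phi i ω)
  rw [LinearMap.range_eq_top.2 (Phi_surj i ω ρ hρ), finrank_top] at hrn
  have hcod : Module.finrank ℝ ((Fin n → ℝ) × ℝ) = n + 1 := by
    rw [Module.finrank_prod, Module.finrank_pi, Module.finrank_self, Fintype.card_fin]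
  have hcard : Fintype.card (F2 d) = 2 ^ d := by
    rw [Fintype.card_fun, ZMod.card, Fintype.card_fin]
  have hdom : Module.finrank ℝ (Fin n → F2 d → ℝ) = n * 2 ^ d := by
    rw [Module.finrank_pi_fintype]
    simp [Module.finrank_pi, hcard, Finset.sum_const, Fintype.card_fin, mul_comm]
  rw [hcod, hdom] at hrn
  obtain ⟨m, hm⟩ : ∃ m, 2 ^ d = m + 1 := ⟨2 ^ d - 1, by
    have : 1 ≤ 2 ^ d := Nat.one_le_two_pow
    omega⟩
  have hm1 : 1 ≤ m := by
    have h2 : 2 ≤ 2 ^ d := by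
      calc 2 = 2 ^ 1 := rfl
      _ ≤ 2 ^ d := Nat.pow_le_pow_right (by norm_num) hd
    omega
  rw [hm] at hrn ⊢
  have e1 : n * (m + 1) = n * m + n := by ring
  have e2 : n * (m + 1 - 1) = n * m := by simp
  rw [e1] at hrn
  rw [e2]
  omega
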